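/- Let k ≥ 2 be an integer, A_max > 0, M > 1, and let P_1, …, P_{k-1}, P_k ≥ 0 be transmit powers with associated minimum half-distances d_i = √(3 P_i / (M − 1)). If √(P_k) ≥ A_max · Σ_{i=1}^{k-1} √(P_i), then for every choice of normalised amplitudes A_1, …, A_{k-1} ∈ [0, A_max] and phases ψ_1, …, ψ_{k-1} ∈ ℝ, the in-phase and quadrature distortion components satisfy |Σ_{i=1}^{k-1} d_i A_i cos ψ_i| ≤ d_k and |Σ_{i=1}^{k-1} d_i A_i sin ψ_i| ≤ d_k. -/
import Mathlib


/-- Theorem 1 (sufficiency): if `√(P k) ≥ A_max · Σ_{i=1}^{k-1} √(P i)`, then for any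
normalised amplitudes `A i ∈ [0, A_max]` and phases `ψ i`, the in-phase and quadrature
distortion components are bounded by `d k`, where `d i = √(3 P i / (M - 1))`. -/
theorem swipt_power_allocation_distortion_bound
    (k : ℕ) (hk : 2 ≤ k) (Amax M : ℝ) (hAmax : 0 < Amax) (hM : 1 < M)
    (P : ℕ → ℝ) (hP : ∀ i, 0 ≤ P i)
    (d : ℕ → ℝ) (hd : ∀ i, d i = Real.sqrt (3 * P i / (M - 1)))
    (hpow : Real.sqrt (P k) ≥ Amax * ∑ i ∈ Finset.Icc 1 (k - 1), Real.sqrt (P i))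
    (A ψ : ℕ → ℝ) (hA : ∀ i ∈ Finset.Icc 1 (k - 1), A i ∈ Set.Icc 0 Amax) :
    |∑ i ∈ Finset.Icc 1 (k - 1), d i * A i * Real.cos (ψ i)| ≤ d k ∧
    |∑ i ∈ Finset.Icc 1 (k - 1), d i * A i * Real.sin (ψ i)| ≤ d k := by
  set c : ℝ := Real.sqrt (3 / (M - 1)) with hc
  have hc0 : 0 ≤ c := Real.sqrt_nonneg _
  have hdc : ∀ i, d i = c * Real.sqrt (P i) := by
    intro i
    have hM1 : (0:ℝ) < M - 1 := by linarith
    rw [hd i, hc, ← Real.sqrt_mul (by positivity) (P i)]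
    ring_nf
  have key : ∀ f : ℝ → ℝ, (∀ x, |f x| ≤ 1) →
      |∑ i ∈ Finset.Icc 1 (k - 1), d i * A i * f (ψ i)| ≤ d k := by
    intro f hf
    calc |∑ i ∈ Finset.Icc 1 (k - 1), d i * A i * f (ψ i)|
        ≤ ∑ i ∈ Finset.Icc 1 (k - 1), |d i * A i * f (ψ i)| :=
          Finset.abs_sum_le_sum_abs _ _
      _ ≤ ∑ i ∈ Finset.Icc 1 (k - 1), c * Real.sqrt (P i) * Amax := by
          apply Finset.sum_le_sum
          intro i hi
          obtain ⟨hA0, hA1⟩ := hA i hi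
          have hd0 : 0 ≤ d i := by rw [hd]; positivity
          rw [abs_mul, abs_mul, abs_of_nonneg hd0, abs_of_nonneg hA0, hdc i]
          calc c * Real.sqrt (P i) * A i * |f (ψ i)|
              ≤ c * Real.sqrt (P i) * A i * 1 := by
                apply mul_le_mul_of_nonneg_left (hf _); positivity
            _ ≤ c * Real.sqrt (P i) * Amax := by
                rw [mul_one]
                exact mul_le_mul_of_nonneg_left hA1 (by positivity)
      _ = c * (Amax * ∑ i ∈ Finset.Icc 1 (k - 1), Real.sqrt (P i)) := by
          rw [Finset.mul_sum, Finset.mul_sum]; apply Finset.sum_congr rfl; intro i _; ring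
      _ ≤ c * Real.sqrt (P k) := mul_le_mul_of_nonneg_left hpow hc0
      _ = d k := (hdc k).symm
  exact ⟨key Real.cos (fun x => Real.abs_cos_le_one x),
         key Real.sin (fun x => Real.abs_sin_le_one x)⟩
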